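/- arXiv:2105.07304 — 2 statements merged into one kernel-verified Lean document; each statement's English description precedes it below -/
import Mathlib

section
/- Let h_1, …, h_L be positive semidefinite N×N complex matrices, H = Σ_{X=1}^L h_X, and on ℂ^N ⊗ ℂ^{L+1} (with ancilla standard basis e_0, e_1, …, e_L) define the Hermitian matrix H' = Σ_{X=1}^L √(h_X) ⊗ (|X⟩⟨0| + |0⟩⟨X|), where √(h_X) is the positive semidefinite square root of h_X and |X⟩⟨0|, |0⟩⟨X| are the matrix units e_X e_0† and e_0 e_X†. Then every nonzero eigenvalue ν of H' satisfies: ν² is an eigenvalue of H (hence ν = ±√λ for some eigenvalue λ of H). Consequently the spectral norm satisfies ‖H'‖ = √(‖H‖); in particular, if each ‖h_X‖ ≤ 1 then ‖H'‖ ≤ √L. -/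
open Matrix Kronecker
open scoped ComplexOrder

/-- Spectral (ℓ²-operator) norm of a complex matrix. -/
noncomputable def specNorm {n : Type*} [Fintype n] [DecidableEq n]
    (A : Matrix n n ℂ) : ℝ :=
  ‖Matrix.toEuclideanCLM (𝕜 := ℂ) A‖

/-- The positive semidefinite square root of a positive semidefinite matrix
(the definition `Matrix.PosSemidef.sqrt` of the older Mathlib, removed since). -/
noncomputable def Matrix.PosSemidef.sqrt {n 𝕜 : Type*} [Fintype n] [RCLike 𝕜] [DecidableEq n]
    {A : Matrix n n 𝕜} (hA : A.PosSemidef) : Matrix n n 𝕜 :=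
  (hA.1.eigenvectorUnitary : Matrix n n 𝕜) *
    diagonal (fun i => ((√(hA.1.eigenvalues i) : ℝ) : 𝕜)) *
    (star hA.1.eigenvectorUnitary : Matrix n n 𝕜)

lemma Matrix.PosSemidef.sqrt_mul_self {n : Type*} [Fintype n] [DecidableEq n]
    {A : Matrix n n ℂ} (hA : A.PosSemidef) : hA.sqrt * hA.sqrt = A := by
  unfold Matrix.PosSemidef.sqrt
  conv_rhs => rw [hA.1.spectral_theorem]
  rw [Unitary.conjStarAlgAut_apply]
  have hU : (star hA.1.eigenvectorUnitary : Matrix n n ℂ) * hA.1.eigenvectorUnitary = 1 := by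
    simp
  calc _ = (hA.1.eigenvectorUnitary : Matrix n n ℂ) *
      (diagonal (fun i => ((√(hA.1.eigenvalues i) : ℝ) : ℂ)) *
        ((star hA.1.eigenvectorUnitary : Matrix n n ℂ) * hA.1.eigenvectorUnitary) *
        diagonal (fun i => ((√(hA.1.eigenvalues i) : ℝ) : ℂ))) *
      (star hA.1.eigenvectorUnitary : Matrix n n ℂ) := by simp only [Matrix.mul_assoc]; rfl
    _ = _ := by
      rw [hU, Matrix.mul_one, diagonal_mul_diagonal]
      congr 3
      funext i
      simp only [Function.comp_apply]
      rw [← Complex.ofReal_mul, Real.mul_self_sqrt (hA.eigenvalues_nonneg i)]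
      rfl

lemma Matrix.PosSemidef.sqrt_isHermitian {n : Type*} [Fintype n] [DecidableEq n]
    {A : Matrix n n ℂ} (hA : A.PosSemidef) : hA.sqrt.IsHermitian := by
  unfold Matrix.PosSemidef.sqrt
  rw [Matrix.star_eq_conjTranspose]
  exact isHermitian_mul_mul_conjTranspose _ (isHermitian_diagonal_of_self_adjoint _
    (by ext i; simp))

/-- Membership in the spectrum of a matrix over `ℂ` is equivalent to being an eigenvalue. -/
lemma mem_spectrum_iff_eig {n : Type*} [Fintype n] [DecidableEq n] (A : Matrix n n ℂ) (ν : ℂ) :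
    ν ∈ spectrum ℂ A ↔ ∃ v, v ≠ 0 ∧ A.mulVec v = ν • v := by
  rw [← AlgEquiv.spectrum_eq (Matrix.toLinAlgEquiv') A,
    ← Module.End.hasEigenvalue_iff_mem_spectrum, Module.End.hasEigenvalue_iff,
    Submodule.ne_bot_iff]
  constructor
  · rintro ⟨v, hv, hv0⟩
    rw [Module.End.mem_eigenspace_iff] at hv
    exact ⟨v, hv0, by simpa [Matrix.toLinAlgEquiv'_apply, Matrix.toLin'_apply] using hv⟩
  · rintro ⟨v, hv0, hv⟩
    exact ⟨v, Module.End.mem_eigenspace_iff.mpr (by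
      simpa [Matrix.toLinAlgEquiv'_apply, Matrix.toLin'_apply] using hv), hv0⟩

lemma norm_le_specNorm {n : Type*} [Fintype n] [DecidableEq n] [Nonempty n]
    {A : Matrix n n ℂ} {ν : ℂ} (hν : ν ∈ spectrum ℂ A) : ‖ν‖ ≤ specNorm A := by
  rw [← AlgEquiv.spectrum_eq (Matrix.toEuclideanCLM (𝕜 := ℂ) (n := n)) A] at hν
  exact spectrum.norm_le_norm_of_mem hν

/-- A Hermitian matrix attains its spectral norm on its spectrum. -/
lemma exists_spectrum_norm_eq {n : Type*} [Fintype n] [DecidableEq n] [Nonempty n]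
    {A : Matrix n n ℂ} (hA : A.IsHermitian) :
    ∃ ν ∈ spectrum ℂ A, ‖ν‖ = specNorm A := by
  have hsa : _root_.IsSelfAdjoint (Matrix.toEuclideanCLM (𝕜 := ℂ) A) := by
    have h1 : star A = A := hA
    simp only [_root_.IsSelfAdjoint, ← map_star, h1]
  obtain ⟨z, hz, hz2⟩ := spectrum.exists_nnnorm_eq_spectralRadius
    (a := Matrix.toEuclideanCLM (𝕜 := ℂ) A)
  rw [hsa.spectralRadius_eq_nnnorm] at hz2
  refine ⟨z, ?_, ?_⟩
  · rwa [← AlgEquiv.spectrum_eq (Matrix.toEuclideanCLM (𝕜 := ℂ) (n := n)) A]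
  · have := ENNReal.coe_inj.mp hz2
    simpa [specNorm, ← norm_toNNReal] using congrArg NNReal.toReal this

lemma specNorm_zero {n : Type*} [Fintype n] [DecidableEq n] :
    specNorm (0 : Matrix n n ℂ) = 0 := by
  rw [specNorm, map_zero, norm_zero]

lemma specNorm_nonneg {n : Type*} [Fintype n] [DecidableEq n] (A : Matrix n n ℂ) :
    0 ≤ specNorm A := norm_nonneg _

lemma sum_mulVec' {ι n m : Type*} [Fintype n] (s : Finset ι) (A : ι → Matrix m n ℂ) (v : n → ℂ) :
    (∑ a ∈ s, A a).mulVec v = ∑ a ∈ s, (A a).mulVec v :=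
  map_sum (Matrix.mulVec.addMonoidHomLeft v) A s

lemma kron_mulVec_zero {N L : ℕ} (A : Matrix (Fin N) (Fin N) ℂ) (X : Fin L)
    (v : Fin N × Fin (L+1) → ℂ) (i : Fin N) :
    (A ⊗ₖ (single X.succ 0 (1 : ℂ) + single 0 X.succ (1 : ℂ))).mulVec v (i, 0)
      = A.mulVec (fun j => v (j, X.succ)) i := by
  simp only [Matrix.mulVec, dotProduct, Matrix.kroneckerMap_apply, Matrix.add_apply,
    Matrix.single, Matrix.of_apply, Fintype.sum_prod_type]
  simp [Fin.succ_ne_zero, (Fin.succ_ne_zero X).symm, mul_ite, ite_mul, Finset.sum_ite_eq,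
    Finset.sum_ite_eq', eq_comm]

lemma kron_mulVec_succ {N L : ℕ} (A : Matrix (Fin N) (Fin N) ℂ) (X Y : Fin L)
    (v : Fin N × Fin (L+1) → ℂ) (i : Fin N) :
    (A ⊗ₖ (single X.succ 0 (1 : ℂ) + single 0 X.succ (1 : ℂ))).mulVec v
        (i, Y.succ)
      = if X = Y then A.mulVec (fun j => v (j, 0)) i else 0 := by
  simp only [Matrix.mulVec, dotProduct, Matrix.kroneckerMap_apply, Matrix.add_apply,
    Matrix.single, Matrix.of_apply, Fintype.sum_prod_type]
  simp [Fin.succ_ne_zero, (Fin.succ_ne_zero Y).symm, mul_ite, ite_mul, Finset.sum_ite_eq,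
    Finset.sum_ite_eq', Fin.succ_inj, eq_comm]
  by_cases hXY : X = Y <;> simp [hXY]

lemma kron_isHermitian {N L : ℕ} {A : Matrix (Fin N) (Fin N) ℂ} (hA : A.IsHermitian) (X : Fin L) :
    (A ⊗ₖ (single X.succ 0 (1 : ℂ) + single 0 X.succ (1 : ℂ))).IsHermitian := by
  show _ᴴ = _
  ext ⟨i, a⟩ ⟨j, b⟩
  simp only [Matrix.conjTranspose_apply, Matrix.kroneckerMap_apply, Matrix.add_apply,
    Matrix.single, Matrix.of_apply, star_mul', star_add, apply_ite (star : ℂ → ℂ),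
    star_one, star_zero]
  rw [← Matrix.conjTranspose_apply, hA]
  by_cases h1 : X.succ = b <;> by_cases h2 : (0 : Fin (L+1)) = a <;>
    by_cases h3 : X.succ = a <;> by_cases h4 : (0 : Fin (L+1)) = b <;>
    simp_all

/-- Nonzero eigenvalues of the gap-amplified Hamiltonian H' are ±√λ for
eigenvalues λ of H, and ‖H'‖ = √‖H‖; in particular ‖H'‖ ≤ √L when each ‖h_X‖ ≤ 1. -/
theorem gap_amplification_spectrum
    {N L : ℕ}
    (h : Fin L → Matrix (Fin N) (Fin N) ℂ)
    (hpsd : ∀ X, (h X).PosSemidef)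
    (H : Matrix (Fin N) (Fin N) ℂ) (hH : H = ∑ X, h X)
    (H' : Matrix (Fin N × Fin (L + 1)) (Fin N × Fin (L + 1)) ℂ)
    (hH' : H' = ∑ X, (hpsd X).sqrt ⊗ₖ
      (single X.succ 0 (1 : ℂ) + single 0 X.succ (1 : ℂ))) :
    (∀ ν : ℂ, ν ≠ 0 → (∃ v, v ≠ 0 ∧ H'.mulVec v = ν • v) →
      ∃ w, w ≠ 0 ∧ H.mulVec w = ν ^ 2 • w)
    ∧ specNorm H' = Real.sqrt (specNorm H)
    ∧ ((∀ X, specNorm (h X) ≤ 1) → specNorm H' ≤ Real.sqrt L) := by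
  set S : Fin L → Matrix (Fin N) (Fin N) ℂ := fun X => (hpsd X).sqrt with hSdef
  have hS2 : ∀ X, S X * S X = h X := fun X => (hpsd X).sqrt_mul_self
  have hSher : ∀ X, (S X).IsHermitian := fun X => (hpsd X).sqrt_isHermitian
  -- mulVec formulas for H'
  have hmv0 : ∀ v : Fin N × Fin (L + 1) → ℂ, ∀ i,
      H'.mulVec v (i, 0) = ∑ X, ((S X).mulVec (fun j => v (j, X.succ))) i := by
    intro v i
    rw [hH', sum_mulVec']
    rw [Finset.sum_apply]
    exact Finset.sum_congr rfl fun X _ => kron_mulVec_zero (S X) X v i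
  have hmvS : ∀ v : Fin N × Fin (L + 1) → ℂ, ∀ X : Fin L, ∀ i,
      H'.mulVec v (i, X.succ) = ((S X).mulVec (fun j => v (j, 0))) i := by
    intro v X i
    rw [hH', sum_mulVec']
    rw [Finset.sum_apply]
    rw [Finset.sum_congr rfl fun Y _ => kron_mulVec_succ (S Y) Y X v i]
    simp
  have hHmv : ∀ w : Fin N → ℂ, H.mulVec w = ∑ X, (h X).mulVec w := by
    intro w; rw [hH, sum_mulVec']
  -- part 1
  have part1 : ∀ ν : ℂ, ν ≠ 0 → (∃ v, v ≠ 0 ∧ H'.mulVec v = ν • v) →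
      ∃ w, w ≠ 0 ∧ H.mulVec w = ν ^ 2 • w := by
    rintro ν hν ⟨v, hv0, hv⟩
    set w : Fin N → ℂ := fun j => v (j, 0) with hwdef
    have hvX : ∀ X : Fin L, (S X).mulVec w = ν • fun j => v (j, X.succ) := by
      intro X
      funext i
      have h1 := congrFun hv (i, X.succ)
      rw [hmvS v X i] at h1
      simpa using h1
    refine ⟨w, ?_, ?_⟩
    · intro hw
      apply hv0
      funext p
      obtain ⟨j, b⟩ := p
      induction b using Fin.cases with
      | zero => exact congrFun hw j
      | succ X =>
        have h1 := congrFun (hvX X) j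
        rw [hw, Matrix.mulVec_zero] at h1
        have h2 := h1.symm
        simp only [Pi.smul_apply, smul_eq_mul, Pi.zero_apply] at h2
        exact (mul_eq_zero.mp h2).resolve_left hν
    · have hsum : ∀ i, ∑ X, ((S X).mulVec (fun j => v (j, X.succ))) i = ν * w i := by
        intro i
        have h1 := congrFun hv (i, 0)
        rw [hmv0 v i] at h1
        simpa using h1
      funext i
      rw [hHmv w, Finset.sum_apply]
      calc ∑ X, ((h X).mulVec w) i
          = ∑ X, ((S X).mulVec ((S X).mulVec w)) i := by
            refine Finset.sum_congr rfl fun X _ => ?_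
            rw [Matrix.mulVec_mulVec, hS2]
        _ = ∑ X, (ν • (S X).mulVec (fun j => v (j, X.succ))) i := by
            refine Finset.sum_congr rfl fun X _ => ?_
            rw [hvX X, Matrix.mulVec_smul]
        _ = ν * ∑ X, ((S X).mulVec (fun j => v (j, X.succ))) i := by
            simp [Finset.mul_sum]
        _ = ν * (ν * w i) := by rw [hsum i]
        _ = (ν ^ 2 • w) i := by simp [pow_two]; ring
  -- part 2 : converse construction
  have part2 : ∀ ν : ℂ, ν ≠ 0 → (∃ w, w ≠ 0 ∧ H.mulVec w = ν ^ 2 • w) →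
      ∃ v, v ≠ 0 ∧ H'.mulVec v = ν • v := by
    rintro ν hν ⟨w, hw0, hw⟩
    set v : Fin N × Fin (L + 1) → ℂ :=
      fun p => Fin.cases (ν * w p.1) (fun X => ((S X).mulVec w) p.1) p.2 with hvdef
    have hv0 : ∀ j, v (j, 0) = ν * w j := fun j => rfl
    have hvS : ∀ X j, v (j, X.succ) = ((S X).mulVec w) j := fun X j => rfl
    refine ⟨v, ?_, ?_⟩
    · intro hv
      apply hw0
      funext j
      have h1 := congrFun hv (j, 0)
      rw [hv0 j] at h1
      simpa [hν] using h1
    · funext p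
      obtain ⟨i, b⟩ := p
      induction b using Fin.cases with
      | zero =>
        rw [Pi.smul_apply, hmv0 v i]
        have h2 : ∑ X, ((S X).mulVec (fun j => v (j, X.succ))) i = H.mulVec w i := by
          rw [hHmv w, Finset.sum_apply]
          refine Finset.sum_congr rfl fun X _ => ?_
          have h3 : (fun j => v (j, X.succ)) = (S X).mulVec w := by
            funext j; exact hvS X j
          rw [h3, Matrix.mulVec_mulVec, hS2]
        rw [h2, hw]
        simp only [Pi.smul_apply, smul_eq_mul, hv0, pow_two]
        ring
      | succ X =>
        rw [Pi.smul_apply, hmvS v X i]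
        have h3 : (fun j => v (j, 0)) = ν • w := by funext j; exact hv0 j
        rw [h3, Matrix.mulVec_smul]
        simp [hvS]
  -- Hermitian
  have hHher : H.IsHermitian := by
    rw [hH]
    show _ᴴ = _
    rw [Matrix.conjTranspose_sum]
    exact Finset.sum_congr rfl fun X _ => (hpsd X).1
  have hH'her : H'.IsHermitian := by
    rw [hH']
    show _ᴴ = _
    rw [Matrix.conjTranspose_sum]
    exact Finset.sum_congr rfl fun X _ => kron_isHermitian (hSher X) X
  -- H = 0 implies H' = 0
  have hzero : H = 0 → H' = 0 := by
    intro h0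
    have hq : ∀ X, h X = 0 := by
      intro X
      have hterm : ∀ x : Fin N → ℂ, (h X).mulVec x = 0 := by
        intro x
        have hsum : ∑ Y, star x ⬝ᵥ (h Y).mulVec x = 0 := by
          have h1 : star x ⬝ᵥ H.mulVec x = 0 := by rw [h0]; simp
          rw [hHmv x] at h1
          rw [← h1]
          simp only [dotProduct, Finset.sum_apply, Finset.mul_sum]
          exact Finset.sum_comm
        have hX0 : star x ⬝ᵥ (h X).mulVec x = 0 :=
          (Finset.sum_eq_zero_iff_of_nonneg (fun Y _ => (hpsd Y).dotProduct_mulVec_nonneg x)).mp hsum X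
            (Finset.mem_univ X)
        exact ((hpsd X).dotProduct_mulVec_zero_iff x).mp hX0
      ext i j
      have h2 := congrFun (hterm (Pi.single j 1)) i
      rw [Matrix.mulVec_single] at h2
      simpa using h2
    have hs0 : ∀ X, S X = 0 := by
      intro X
      have h4 : (S X)ᴴ * (S X) = 0 := by
        rw [(hSher X : (S X)ᴴ = S X), hS2, hq]
      exact Matrix.conjTranspose_mul_self_eq_zero.mp h4
    rw [hH']
    refine Finset.sum_eq_zero fun X _ => ?_
    show S X ⊗ₖ _ = 0
    rw [hs0 X, Matrix.zero_kronecker]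
  -- the main norm identity
  have hmain : specNorm H' = Real.sqrt (specNorm H) := by
    by_cases h0 : H = 0
    · rw [h0, hzero h0, specNorm_zero, specNorm_zero, Real.sqrt_zero]
    · haveI : Nonempty (Fin N) := by
        by_contra hne
        exact h0 (by ext i j; exact (hne ⟨i⟩).elim)
      refine le_antisymm ?_ ?_
      · obtain ⟨ν, hν, hνn⟩ := exists_spectrum_norm_eq hH'her
        rw [← hνn]
        by_cases hν0 : ν = 0
        · rw [hν0, norm_zero]
          exact Real.sqrt_nonneg _
        · obtain ⟨w, hw0, hw⟩ := part1 ν hν0 ((mem_spectrum_iff_eig H' ν).mp hν)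
          have hmem : ν ^ 2 ∈ spectrum ℂ H :=
            (mem_spectrum_iff_eig H (ν ^ 2)).mpr ⟨w, hw0, hw⟩
          have hle : ‖ν ^ 2‖ ≤ specNorm H := norm_le_specNorm hmem
          have : ‖ν‖ = Real.sqrt ‖ν ^ 2‖ := by
            rw [norm_pow, Real.sqrt_sq (norm_nonneg ν)]
          rw [this]
          exact Real.sqrt_le_sqrt hle
      · obtain ⟨μ, hμ, hμn⟩ := exists_spectrum_norm_eq hHher
        rw [← hμn]
        by_cases hμ0 : μ = 0
        · rw [hμ0, norm_zero, Real.sqrt_zero]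
          exact specNorm_nonneg _
        · obtain ⟨ν, hν2⟩ := IsAlgClosed.exists_pow_nat_eq μ (n := 2) (by norm_num)
          have hν0 : ν ≠ 0 := by
            intro hc
            rw [hc] at hν2
            exact hμ0 (by simpa using hν2.symm)
          obtain ⟨w, hw0, hw⟩ := (mem_spectrum_iff_eig H μ).mp hμ
          obtain ⟨v, hv0, hv⟩ := part2 ν hν0 ⟨w, hw0, by rw [hν2]; exact hw⟩
          have hmem : ν ∈ spectrum ℂ H' := (mem_spectrum_iff_eig H' ν).mpr ⟨v, hv0, hv⟩
          have hle : ‖ν‖ ≤ specNorm H' := norm_le_specNorm hmem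
          have heq : Real.sqrt ‖μ‖ = ‖ν‖ := by
            rw [← hν2, norm_pow, Real.sqrt_sq (norm_nonneg ν)]
          rw [heq]
          exact hle
  refine ⟨part1, hmain, fun hb => ?_⟩
  have hHle : specNorm H ≤ (L : ℝ) := by
    rw [specNorm, hH, map_sum]
    calc ‖∑ X, Matrix.toEuclideanCLM (𝕜 := ℂ) (h X)‖
        ≤ ∑ X : Fin L, ‖Matrix.toEuclideanCLM (𝕜 := ℂ) (h X)‖ := norm_sum_le _ _
      _ ≤ ∑ _X : Fin L, (1 : ℝ) := Finset.sum_le_sum fun X _ => hb X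
      _ = (L : ℝ) := by simp
  rw [hmain]
  exact Real.sqrt_le_sqrt hHle
end

section
/- Identify the n-fold tensor power (ℂ^d)^{⊗n} with the space V of functions (Fin n → Fin d) → ℂ. For a permutation σ of Fin n, let P_σ : V → V be the linear map (P_σ f)(x) = f(x ∘ σ). For a d×d complex matrix A, let Δ(A) : V → V denote the linear map Σ_{i ∈ Fin n} (1 ⊗ ⋯ ⊗ A ⊗ ⋯ ⊗ 1), with A acting on the i-th tensor factor and the identity elsewhere; explicitly, its matrix entries are Δ(A)_{x,y} = Σ_i [∀ j ≠ i, x(j) = y(j)] · A_{x(i), y(i)}. Then the unital ℂ-subalgebra of endomorphisms of V generated by { Δ(A) : A a d×d complex matrix } equals the commutant { T : T ∘ P_σ = P_σ ∘ T for every permutation σ of Fin n }. -/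
/-- The n-fold tensor power (ℂ^d)^{⊗n}, as functions (Fin n → Fin d) → ℂ. -/
abbrev TensorPowSpace (n d : ℕ) := (Fin n → Fin d) → ℂ

/-- The permutation action P_σ on tensor factors: (P_σ f)(x) = f(x ∘ σ). -/
def permAction (n d : ℕ) (σ : Equiv.Perm (Fin n)) :
    Module.End ℂ (TensorPowSpace n d) where
  toFun f := fun x => f (x ∘ σ)
  map_add' _ _ := rfl
  map_smul' _ _ := rfl

/-- The collective operator Δ(A) = Σ_i 1 ⊗ ⋯ ⊗ A ⊗ ⋯ ⊗ 1 (A on the i-th factor). -/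
noncomputable def collective (n d : ℕ) (A : Matrix (Fin d) (Fin d) ℂ) :
    Module.End ℂ (TensorPowSpace n d) :=
  Matrix.toLin' (Matrix.of fun x y : Fin n → Fin d =>
    ∑ i, if ∀ j, j ≠ i → x j = y j then A (x i) (y i) else 0)


open Matrix Finset

namespace SchurWeylAux

variable {n d : ℕ}

/-- tensor product of matrices g i, as a matrix on function space -/
def tens (g : Fin n → Matrix (Fin d) (Fin d) ℂ) :
    Matrix (Fin n → Fin d) (Fin n → Fin d) ℂ :=
  Matrix.of fun x y => ∏ i, g i (x i) (y i)

@[simp] lemma tens_apply (g : Fin n → Matrix (Fin d) (Fin d) ℂ) (x y : Fin n → Fin d) :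
    tens g x y = ∏ i, g i (x i) (y i) := rfl

lemma tens_mul (g h : Fin n → Matrix (Fin d) (Fin d) ℂ) :
    tens g * tens h = tens (fun i => g i * h i) := by
  ext x z
  simp only [Matrix.mul_apply, tens_apply]
  rw [Finset.prod_univ_sum (fun _ : Fin n => (univ : Finset (Fin d)))
    (fun i k => g i (x i) k * h i k (z i))]
  rw [Fintype.piFinset_univ]
  exact Finset.sum_congr rfl fun w _ => (Finset.prod_mul_distrib).symm

lemma tens_one : tens (fun _ : Fin n => (1 : Matrix (Fin d) (Fin d) ℂ)) = 1 := by
  ext x y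
  simp only [tens_apply, Matrix.one_apply]
  rw [Finset.prod_boole]
  simp [funext_iff]


/-- A on tensor-factor i, identity elsewhere -/
def sb (i : Fin n) (A : Matrix (Fin d) (Fin d) ℂ) :
    Matrix (Fin n → Fin d) (Fin n → Fin d) ℂ :=
  tens (Function.update (fun _ => (1 : Matrix (Fin d) (Fin d) ℂ)) i A)

lemma update_mul_update (i : Fin n) (A B : Matrix (Fin d) (Fin d) ℂ) :
    (fun k => Function.update (fun _ => (1 : Matrix (Fin d) (Fin d) ℂ)) i A k *
      Function.update (fun _ => (1 : Matrix (Fin d) (Fin d) ℂ)) i B k)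
    = Function.update (fun _ => (1 : Matrix (Fin d) (Fin d) ℂ)) i (A * B) := by
  funext k
  by_cases h : k = i <;> simp [Function.update_apply, h]

lemma sb_mul (i : Fin n) (A B : Matrix (Fin d) (Fin d) ℂ) :
    sb i A * sb i B = sb i (A * B) := by
  rw [sb, sb, tens_mul, update_mul_update]; rfl

lemma sb_one (i : Fin n) : sb i (1 : Matrix (Fin d) (Fin d) ℂ) = 1 := by
  rw [sb, show Function.update (fun _ => (1 : Matrix (Fin d) (Fin d) ℂ)) i 1
    = fun _ => 1 by funext k; by_cases h : k = i <;> simp [Function.update_apply, h],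
    tens_one]

lemma sb_pow (i : Fin n) (A : Matrix (Fin d) (Fin d) ℂ) (m : ℕ) :
    sb i A ^ m = sb i (A ^ m) := by
  induction m with
  | zero => simp [sb_one]
  | succ m ih => rw [pow_succ, pow_succ, ih, sb_mul]

lemma sb_apply (i : Fin n) (A : Matrix (Fin d) (Fin d) ℂ) (x y : Fin n → Fin d) :
    sb i A x y = if ∀ j, j ≠ i → x j = y j then A (x i) (y i) else 0 := by
  have h1 : ∀ j : Fin n, Function.update (fun _ => (1 : Matrix (Fin d) (Fin d) ℂ)) i A j (x j) (y j)
      = if j = i then A (x j) (y j) else if x j = y j then 1 else 0 := by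
    intro j
    by_cases h : j = i <;> simp [Function.update_apply, h, Matrix.one_apply]
  rw [sb, tens_apply]
  rw [Finset.prod_congr rfl (fun j _ => h1 j)]
  rw [← Finset.mul_prod_erase univ _ (Finset.mem_univ i)]
  have h2 : ∀ j ∈ univ.erase i,
      (if j = i then A (x j) (y j) else if x j = y j then 1 else 0)
      = if x j = y j then (1:ℂ) else 0 := by
    intro j hj
    rw [if_neg (Finset.mem_erase.mp hj).1]
  rw [Finset.prod_congr rfl h2, Finset.prod_boole, if_pos rfl]
  by_cases h : ∀ j, j ≠ i → x j = y j
  · have hP : ∀ j ∈ univ.erase i, x j = y j := fun j hj => h j (Finset.mem_erase.mp hj).1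
    rw [if_pos hP, mul_one, if_pos h]
  · have hP : ¬ ∀ j ∈ univ.erase i, x j = y j := fun hc =>
      h fun j hj => hc j (Finset.mem_erase.mpr ⟨hj, Finset.mem_univ j⟩)
    rw [if_neg hP, mul_zero, if_neg h]

/-- the matrix of the collective operator -/
lemma collective_matrix (A : Matrix (Fin d) (Fin d) ℂ) :
    (Matrix.of fun x y : Fin n → Fin d =>
      ∑ i, if ∀ j, j ≠ i → x j = y j then A (x i) (y i) else 0)
    = ∑ i, sb i A := by
  ext x y
  rw [Matrix.sum_apply, Matrix.of_apply]
  exact Finset.sum_congr rfl fun i _ => (sb_apply i A x y).symm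

/-- the permutation matrix -/
def Pmat (σ : Equiv.Perm (Fin n)) : Matrix (Fin n → Fin d) (Fin n → Fin d) ℂ :=
  Matrix.of fun x y => if y = x ∘ σ then 1 else 0

lemma tens_mul_Pmat (g : Fin n → Matrix (Fin d) (Fin d) ℂ) (σ : Equiv.Perm (Fin n)) :
    tens g * Pmat σ = Pmat σ * tens (g ∘ σ) := by
  ext x z
  rw [Matrix.mul_apply, Matrix.mul_apply]
  have hL : ∀ y, tens g x y * Pmat σ y z
      = if y = z ∘ ⇑σ.symm then tens g x (z ∘ ⇑σ.symm) else 0 := by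
    intro y
    by_cases h : z = y ∘ ⇑σ
    · have hy : y = z ∘ ⇑σ.symm := by
        funext j; rw [h]; simp
      rw [Pmat, Matrix.of_apply, if_pos h, mul_one, if_pos hy, hy]
    · have hy : ¬ (y = z ∘ ⇑σ.symm) := by
        intro hc; apply h; funext j; rw [hc]; simp
      rw [Pmat, Matrix.of_apply, if_neg h, mul_zero, if_neg hy]
  have hR : ∀ y, Pmat σ x y * tens (g ∘ ⇑σ) y z
      = if y = x ∘ ⇑σ then tens (g ∘ ⇑σ) (x ∘ ⇑σ) z else 0 := by
    intro y
    by_cases h : y = x ∘ ⇑σ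
    · rw [Pmat, Matrix.of_apply, if_pos h, one_mul, if_pos h, h]
    · rw [Pmat, Matrix.of_apply, if_neg h, zero_mul, if_neg h]
  rw [Finset.sum_congr rfl fun y _ => hL y, Finset.sum_congr rfl fun y _ => hR y,
    Finset.sum_ite_eq' univ _ _, Finset.sum_ite_eq' univ _ _,
    if_pos (Finset.mem_univ _), if_pos (Finset.mem_univ _)]
  rw [tens_apply, tens_apply]
  simp only [Function.comp_apply]
  rw [← Equiv.prod_comp σ (fun i => g i (x i) (z (σ.symm i)))]
  simp

lemma update_comp_perm (i : Fin n) (A : Matrix (Fin d) (Fin d) ℂ) (σ : Equiv.Perm (Fin n)) :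
    (Function.update (fun _ => (1 : Matrix (Fin d) (Fin d) ℂ)) i A) ∘ ⇑σ
    = Function.update (fun _ => (1 : Matrix (Fin d) (Fin d) ℂ)) (σ.symm i) A := by
  funext k
  simp only [Function.comp_apply, Function.update_apply]
  by_cases h : k = σ.symm i
  · rw [if_pos h, if_pos]; rw [h]; simp
  · rw [if_neg h, if_neg]; intro hc; apply h; rw [← hc]; simp

lemma Dmat_comm_Pmat (A : Matrix (Fin d) (Fin d) ℂ) (σ : Equiv.Perm (Fin n)) :
    (∑ i, sb i A) * Pmat σ = Pmat σ * ∑ i, sb i A := by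
  rw [Finset.sum_mul, Finset.mul_sum]
  rw [Finset.sum_congr rfl fun i _ => (by
    rw [sb, tens_mul_Pmat, update_comp_perm]; rfl :
    sb i A * Pmat σ = Pmat σ * sb (σ.symm i) A)]
  exact Equiv.sum_comp σ.symm (fun i => Pmat (d := d) σ * sb i A)


lemma commutant_apply {T : Matrix (Fin n → Fin d) (Fin n → Fin d) ℂ}
    (h : ∀ σ : Equiv.Perm (Fin n), T * Pmat σ = Pmat σ * T)
    (σ : Equiv.Perm (Fin n)) (x y : Fin n → Fin d) :
    T (x ∘ ⇑σ) (y ∘ ⇑σ) = T x y := by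
  have h2 := congrFun (congrFun (h σ) x) (y ∘ ⇑σ)
  simp only [Matrix.mul_apply] at h2
  have hL : ∀ z, T x z * Pmat (d := d) σ z (y ∘ ⇑σ) = if z = y then T x z else 0 := by
    intro z
    rw [Pmat, Matrix.of_apply]
    by_cases hz : z = y
    · subst hz; rw [if_pos rfl, if_pos rfl, mul_one]
    · rw [if_neg, if_neg hz, mul_zero]
      intro hc
      exact hz (funext fun j => by
        have := congrFun hc (σ.symm j)
        simpa using this.symm)
  have hR : ∀ z, Pmat (d := d) σ x z * T z (y ∘ ⇑σ)
      = if z = x ∘ ⇑σ then T z (y ∘ ⇑σ) else 0 := by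
    intro z
    rw [Pmat, Matrix.of_apply]
    by_cases hz : z = x ∘ ⇑σ
    · rw [if_pos hz, if_pos hz, one_mul]
    · rw [if_neg hz, if_neg hz, zero_mul]
  rw [Finset.sum_congr rfl fun z _ => hL z, Finset.sum_congr rfl fun z _ => hR z,
    Finset.sum_ite_eq' univ, Finset.sum_ite_eq' univ, if_pos (Finset.mem_univ _),
    if_pos (Finset.mem_univ _)] at h2
  exact h2.symm

lemma matrix_decomp (T : Matrix (Fin n → Fin d) (Fin n → Fin d) ℂ) :
    T = ∑ p : Fin n → Fin d × Fin d,
      T (fun k => (p k).1) (fun k => (p k).2) •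
        tens (fun k => Matrix.single (p k).1 (p k).2 1) := by
  ext x y
  rw [Matrix.sum_apply]
  have h1 : ∀ p : Fin n → Fin d × Fin d,
      (T (fun k => (p k).1) (fun k => (p k).2) •
        tens (fun k => Matrix.single (p k).1 (p k).2 1)) x y
      = if p = (fun k => (x k, y k)) then
          T (fun k => (p k).1) (fun k => (p k).2) else 0 := by
    intro p
    rw [Matrix.smul_apply, tens_apply]
    have hs : ∀ k, Matrix.single (p k).1 (p k).2 (1:ℂ) (x k) (y k)
        = if p k = (x k, y k) then 1 else 0 := by
      intro k
      rw [Matrix.single, Matrix.of_apply]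
      exact if_congr (Iff.symm Prod.ext_iff) rfl rfl
    rw [Finset.prod_congr rfl fun k _ => hs k, Finset.prod_boole]
    by_cases h : p = fun k => (x k, y k)
    · have hc : ∀ i ∈ univ, p i = (x i, y i) := fun i _ => congrFun h i
      rw [if_pos hc, if_pos h, smul_eq_mul, mul_one]
    · have hc : ¬ ∀ i ∈ univ, p i = (x i, y i) := fun hc =>
        h (funext fun k => hc k (Finset.mem_univ k))
      rw [if_neg hc, if_neg h, smul_eq_mul, mul_zero]
  rw [Finset.sum_congr rfl fun p _ => h1 p, Finset.sum_ite_eq' univ,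
    if_pos (Finset.mem_univ _)]

lemma tens_const_sum (s : Finset (Fin n)) (g : Fin n → Matrix (Fin d) (Fin d) ℂ) :
    tens (fun _ => ∑ i ∈ s, g i)
    = ∑ r ∈ Fintype.piFinset (fun _ : Fin n => s), tens (g ∘ r) := by
  ext x y
  rw [Matrix.sum_apply, tens_apply]
  simp only [Matrix.sum_apply]
  rw [Finset.prod_univ_sum (fun _ : Fin n => s) (fun k i => g i (x k) (y k))]
  rfl

lemma coeff_eq (r : Fin n → Fin n) :
    (∑ s : Finset (Fin n), if ∀ k, r k ∈ s then ((-1:ℂ)) ^ (n - s.card) else 0)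
    = if Function.Bijective r then 1 else 0 := by
  classical
  set R : Finset (Fin n) := Finset.image r univ with hR
  have hcond : ∀ s : Finset (Fin n), (∀ k, r k ∈ s) ↔ R ⊆ s := by
    intro s
    rw [hR, Finset.image_subset_iff]
    simp
  rw [Finset.sum_congr rfl fun s _ =>
    if_congr (hcond s) rfl rfl, ← Finset.sum_filter]
  have step : ∑ s ∈ univ.filter (fun s : Finset (Fin n) => R ⊆ s), ((-1:ℂ)) ^ (n - s.card)
      = ∑ t ∈ Rᶜ.powerset, ((-1:ℂ)) ^ (n - (t.card + R.card)) := by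
    refine Finset.sum_bij' (fun s _ => s \ R) (fun t _ => t ∪ R) ?_ ?_ ?_ ?_ ?_
    · intro s hs
      rw [Finset.mem_powerset]
      intro a ha
      rw [Finset.mem_compl]
      exact (Finset.mem_sdiff.mp ha).2
    · intro t ht
      rw [Finset.mem_filter]
      exact ⟨Finset.mem_univ _, Finset.subset_union_right⟩
    · intro s hs
      exact Finset.sdiff_union_of_subset (Finset.mem_filter.mp hs).2
    · intro t ht
      refine Finset.union_sdiff_cancel_right ?_
      rw [Finset.disjoint_right]
      intro a haR hat
      exact (Finset.mem_compl.mp ((Finset.mem_powerset.mp ht) hat)) haR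
    · intro s hs
      congr 1
      have hsub := (Finset.mem_filter.mp hs).2
      rw [Finset.card_sdiff_of_subset hsub, Nat.sub_add_cancel (Finset.card_le_card hsub)]
  rw [step]
  have hcast : (∑ t ∈ Rᶜ.powerset, ((-1:ℂ)) ^ t.card)
      = if Rᶜ = ∅ then 1 else 0 := by
    have := congrArg (fun z : ℤ => (z : ℂ))
      (Finset.sum_powerset_neg_one_pow_card (x := Rᶜ))
    push_cast at this
    exact this
  have hexp : ∀ t ∈ Rᶜ.powerset, ((-1:ℂ)) ^ (n - (t.card + R.card))
      = ((-1:ℂ)) ^ Rᶜ.card * ((-1:ℂ)) ^ t.card := by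
    intro t ht
    have hcard : Rᶜ.card = n - R.card := by
      rw [Finset.card_compl, Fintype.card_fin]
    have h1 : n - (t.card + R.card) = Rᶜ.card - t.card := by
      rw [hcard]
      omega
    have h2 : t.card ≤ Rᶜ.card := Finset.card_le_card (Finset.mem_powerset.mp ht)
    rw [h1, pow_sub₀ _ (by norm_num : (-1:ℂ) ≠ 0) h2]
    congr 1
    rw [← inv_pow, inv_neg, inv_one]
  rw [Finset.sum_congr rfl hexp, ← Finset.mul_sum, hcast]
  have hbij : Function.Bijective r ↔ Rᶜ = ∅ := by
    rw [Finset.compl_eq_empty_iff]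
    constructor
    · intro hb
      apply Finset.eq_univ_iff_forall.mpr
      intro y
      obtain ⟨x, hx⟩ := hb.2 y
      rw [hR]
      exact Finset.mem_image.mpr ⟨x, Finset.mem_univ x, hx⟩
    · intro hu
      apply Finite.surjective_iff_bijective.mp
      intro y
      have : y ∈ R := hu ▸ Finset.mem_univ y
      obtain ⟨x, _, hx⟩ := Finset.mem_image.mp (hR ▸ this)
      exact ⟨x, hx⟩
  by_cases hb : Function.Bijective r
  · rw [if_pos (hbij.mp hb), if_pos hb, mul_one]
    rw [hbij.mp hb]
    simp
  · rw [if_neg fun hc => hb (hbij.mpr hc), if_neg hb, mul_zero]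


lemma sum_perm_tens (g : Fin n → Matrix (Fin d) (Fin d) ℂ) :
    ∑ σ : Equiv.Perm (Fin n), tens (g ∘ ⇑σ)
    = ∑ s : Finset (Fin n), ((-1:ℂ)) ^ (n - s.card) • tens (fun _ => ∑ i ∈ s, g i) := by
  classical
  have step1 : ∀ s : Finset (Fin n),
      ((-1:ℂ)) ^ (n - s.card) • tens (fun _ => ∑ i ∈ s, g i)
      = ∑ r : Fin n → Fin n,
          if ∀ k, r k ∈ s then ((-1:ℂ)) ^ (n - s.card) • tens (g ∘ r) else 0 := by
    intro s
    rw [tens_const_sum, Finset.smul_sum]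
    rw [← Finset.univ_inter (Fintype.piFinset fun _ : Fin n => s), ← Finset.sum_ite_mem]
    exact Finset.sum_congr rfl fun r _ => if_congr Fintype.mem_piFinset rfl rfl
  rw [Finset.sum_congr rfl fun s (_ : s ∈ univ) => step1 s, Finset.sum_comm]
  have step2 : ∀ r : Fin n → Fin n,
      (∑ s : Finset (Fin n),
          if ∀ k, r k ∈ s then ((-1:ℂ)) ^ (n - s.card) • tens (g ∘ r) else 0)
      = if Function.Bijective r then tens (g ∘ r) else 0 := by
    intro r
    have hsplit : ∀ s : Finset (Fin n),
        (if ∀ k, r k ∈ s then ((-1:ℂ)) ^ (n - s.card) • tens (g ∘ r) else 0)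
        = (if ∀ k, r k ∈ s then ((-1:ℂ)) ^ (n - s.card) else 0) • tens (g ∘ r) := by
      intro s; split_ifs <;> simp
    rw [Finset.sum_congr rfl fun s _ => hsplit s, ← Finset.sum_smul, coeff_eq]
    split_ifs <;> simp
  rw [Finset.sum_congr rfl fun r (_ : r ∈ univ) => step2 r, ← Finset.sum_filter]
  refine Finset.sum_bij' (fun (σ : Equiv.Perm (Fin n)) (_ : σ ∈ univ) => ⇑σ)
    (fun r hr => Equiv.ofBijective r (Finset.mem_filter.mp hr).2) ?_ ?_ ?_ ?_ ?_
  · intro σ _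
    exact Finset.mem_filter.mpr ⟨Finset.mem_univ _, σ.bijective⟩
  · intro r hr
    exact Finset.mem_univ _
  · intro σ _
    exact Equiv.ext fun x => rfl
  · intro r hr
    rfl
  · intro σ _
    rfl

lemma esymm_mem (N : ℕ) (k : ℕ) :
    MvPolynomial.esymm (Fin N) ℂ k ∈
      Algebra.adjoin ℂ (Set.range fun j : ℕ => MvPolynomial.psum (Fin N) ℂ (j + 1)) := by
  induction k using Nat.strong_induction_on with
  | _ k ih =>
    rcases Nat.eq_zero_or_pos k with hk | hk
    · rw [hk, MvPolynomial.esymm_zero]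
      exact Subalgebra.one_mem _
    · have hk' : (k:ℂ) ≠ 0 := Nat.cast_ne_zero.mpr hk.ne'
      have hN := MvPolynomial.mul_esymm_eq_sum (Fin N) ℂ k
      have hcast : ((k:ℕ) : MvPolynomial (Fin N) ℂ)
          = algebraMap ℂ (MvPolynomial (Fin N) ℂ) ((k:ℕ):ℂ) := by
        rw [map_natCast]
      rw [hcast, ← Algebra.smul_def] at hN
      have hmem : ((k:ℕ):ℂ) • MvPolynomial.esymm (Fin N) ℂ k ∈
          Algebra.adjoin ℂ (Set.range fun j : ℕ => MvPolynomial.psum (Fin N) ℂ (j + 1)) := by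
        rw [hN]
        refine Subalgebra.mul_mem _ ?_ ?_
        · exact Subalgebra.pow_mem _ (Subalgebra.neg_mem _ (Subalgebra.one_mem _)) _
        · refine Subalgebra.sum_mem _ ?_
          intro a ha
          rw [Finset.mem_filter, Finset.HasAntidiagonal.mem_antidiagonal] at ha
          obtain ⟨ha1, ha2⟩ := ha
          have hpos : 0 < a.2 := by omega
          have h2 : a.2 - 1 + 1 = a.2 := Nat.succ_pred_eq_of_pos hpos
          refine Subalgebra.mul_mem _ (Subalgebra.mul_mem _ ?_ (ih a.1 ha2)) ?_
          · exact Subalgebra.pow_mem _ (Subalgebra.neg_mem _ (Subalgebra.one_mem _)) _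
          · refine Algebra.subset_adjoin ⟨a.2 - 1, ?_⟩
            show MvPolynomial.psum (Fin N) ℂ (a.2 - 1 + 1) = MvPolynomial.psum (Fin N) ℂ a.2
            rw [h2]
      have := Subalgebra.smul_mem _ hmem (((k:ℕ):ℂ))⁻¹
      rwa [smul_smul, inv_mul_cancel₀ hk', one_smul] at this

lemma tens_const_mem (a : Matrix (Fin d) (Fin d) ℂ) :
    tens (fun _ : Fin n => a) ∈ Algebra.adjoin ℂ
      {M : Matrix (Fin n → Fin d) (Fin n → Fin d) ℂ | ∃ A, M = ∑ i, sb i A} := by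
  classical
  set s : Set (Matrix (Fin n → Fin d) (Fin n → Fin d) ℂ) :=
    Set.range (fun i : Fin n => sb i a) with hs
  have hcomm : ∀ x ∈ s, ∀ y ∈ s, x * y = y * x := by
    rintro x ⟨i, rfl⟩ y ⟨j, rfl⟩
    show sb i a * sb j a = sb j a * sb i a
    rw [show sb i a = tens (Function.update (fun _ => (1 : Matrix (Fin d) (Fin d) ℂ)) i a)
      from rfl, show sb j a = tens (Function.update (fun _ => (1 : Matrix (Fin d) (Fin d) ℂ)) j a)
      from rfl, tens_mul, tens_mul]
    refine congrArg tens (funext fun k => ?_)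
    by_cases hi' : k = i <;> by_cases hj' : k = j <;>
      simp [Function.update_apply, hi', hj']
  letI : CommRing (Algebra.adjoin ℂ s) := Algebra.adjoinCommRingOfComm ℂ hcomm
  set u : Fin n → (Algebra.adjoin ℂ s) :=
    fun i => ⟨sb i a, Algebra.subset_adjoin ⟨i, rfl⟩⟩ with hu
  set φ : MvPolynomial (Fin n) ℂ →ₐ[ℂ] (Algebra.adjoin ℂ s) := MvPolynomial.aeval u with hφdef
  set ψ : MvPolynomial (Fin n) ℂ →ₐ[ℂ]
      Matrix (Fin n → Fin d) (Fin n → Fin d) ℂ := ((Algebra.adjoin ℂ s).val).comp φ with hψdef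
  have hprodgen : ∀ t : Finset (Fin n),
      ((∏ i ∈ t, u i : Algebra.adjoin ℂ s) : Matrix (Fin n → Fin d) (Fin n → Fin d) ℂ)
        = tens (fun k => if k ∈ t then a else 1) := by
    intro t
    induction t using Finset.induction_on with
    | empty => simpa using tens_one.symm
    | @insert i t hi iht =>
      rw [Finset.prod_insert hi]
      have hcoe : ((u i * ∏ j ∈ t, u j : Algebra.adjoin ℂ s) :
          Matrix (Fin n → Fin d) (Fin n → Fin d) ℂ)
          = sb i a * ((∏ j ∈ t, u j : Algebra.adjoin ℂ s) :
            Matrix (Fin n → Fin d) (Fin n → Fin d) ℂ) := rfl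
      rw [hcoe, iht, show sb i a
        = tens (Function.update (fun _ => (1 : Matrix (Fin d) (Fin d) ℂ)) i a) from rfl,
        tens_mul]
      refine congrArg tens (funext fun k => ?_)
      by_cases hk : k = i <;>
        simp [Function.update_apply, hk, hi, Finset.mem_insert]
  have hpc := Finset.powersetCard_self (Finset.univ : Finset (Fin n))
  rw [Finset.card_fin] at hpc
  have hesymm : MvPolynomial.esymm (Fin n) ℂ n = ∏ i, MvPolynomial.X i := by
    rw [MvPolynomial.esymm, hpc, Finset.sum_singleton]
  have hφe : φ (MvPolynomial.esymm (Fin n) ℂ n) = ∏ i, u i := by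
    rw [hesymm, map_prod]
    exact Finset.prod_congr rfl fun i _ => by simp [hφdef]
  have h1 : ψ (MvPolynomial.esymm (Fin n) ℂ n) = tens (fun _ : Fin n => a) := by
    rw [hψdef, AlgHom.comp_apply, hφe]
    rw [show ((Algebra.adjoin ℂ s).val (∏ i, u i) :
      Matrix (Fin n → Fin d) (Fin n → Fin d) ℂ)
      = ((∏ i, u i : Algebra.adjoin ℂ s) : Matrix (Fin n → Fin d) (Fin n → Fin d) ℂ) from rfl]
    rw [hprodgen univ]
    exact congrArg tens (funext fun k => by simp)
  have h2 : ∀ m : ℕ, ψ (MvPolynomial.psum (Fin n) ℂ m) = ∑ i, sb i (a ^ m) := by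
    intro m
    rw [MvPolynomial.psum, map_sum]
    refine Finset.sum_congr rfl fun i _ => ?_
    rw [map_pow]
    have hXi : ψ (MvPolynomial.X i) = sb i a := by
      simp [hψdef, hφdef]; rfl
    rw [hXi, sb_pow]
  have hmem := esymm_mem n n
  have hle : Algebra.adjoin ℂ
      (⇑ψ '' (Set.range fun j : ℕ => MvPolynomial.psum (Fin n) ℂ (j + 1)))
      ≤ Algebra.adjoin ℂ
        {M : Matrix (Fin n → Fin d) (Fin n → Fin d) ℂ | ∃ A, M = ∑ i, sb i A} := by
    rw [Algebra.adjoin_le_iff]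
    rintro x ⟨q, ⟨j, rfl⟩, rfl⟩
    exact Algebra.subset_adjoin ⟨a ^ (j + 1), h2 (j + 1)⟩
  have hin : ψ (MvPolynomial.esymm (Fin n) ℂ n) ∈ Algebra.adjoin ℂ
      (⇑ψ '' (Set.range fun j : ℕ => MvPolynomial.psum (Fin n) ℂ (j + 1))) := by
    rw [← AlgHom.map_adjoin]
    exact Subalgebra.mem_map.mpr ⟨_, hmem, rfl⟩
  have := hle hin
  rwa [h1] at this


lemma matrix_main (Tm : Matrix (Fin n → Fin d) (Fin n → Fin d) ℂ)
    (h : ∀ σ : Equiv.Perm (Fin n), Tm * Pmat σ = Pmat σ * Tm) :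
    Tm ∈ Algebra.adjoin ℂ
      {M : Matrix (Fin n → Fin d) (Fin n → Fin d) ℂ | ∃ A, M = ∑ i, sb i A} := by
  classical
  set E : Fin d × Fin d → Matrix (Fin d) (Fin d) ℂ :=
    fun q => Matrix.single q.1 q.2 1 with hE
  set t : (Fin n → Fin d × Fin d) → ℂ :=
    fun p => Tm (fun k => (p k).1) (fun k => (p k).2) with ht
  have hdecomp : ∀ σ : Equiv.Perm (Fin n),
      ∑ p : Fin n → Fin d × Fin d, t p • tens (fun k => E (p (σ k))) = Tm := by
    intro σ
    have hbij : Function.Bijective (fun p : Fin n → Fin d × Fin d => p ∘ ⇑σ) :=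
      (Equiv.arrowCongr σ.symm (Equiv.refl (Fin d × Fin d))).bijective
    have hcoeff : ∀ p : Fin n → Fin d × Fin d, t (p ∘ ⇑σ) = t p := by
      intro p
      exact commutant_apply h σ (fun k => (p k).1) (fun k => (p k).2)
    rw [Fintype.sum_bijective (fun p : Fin n → Fin d × Fin d => p ∘ ⇑σ) hbij
      (fun p => t p • tens (fun k => E (p (σ k))))
      (fun q => t q • tens (fun k => E (q k)))
      (fun p => congrArg (fun c : ℂ => c • tens (fun k => E (p (σ k)))) (hcoeff p).symm)]
    exact (matrix_decomp Tm).symm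
  set m := Fintype.card (Equiv.Perm (Fin n)) with hm
  have hsmul : (m : ℂ) • Tm
      = ∑ p : Fin n → Fin d × Fin d, t p •
          ∑ σ : Equiv.Perm (Fin n), tens ((fun k => E (p k)) ∘ ⇑σ) := by
    calc (m : ℂ) • Tm = m • Tm := Nat.cast_smul_eq_nsmul ℂ m Tm
    _ = ∑ _σ : Equiv.Perm (Fin n), Tm := by
        rw [Finset.sum_const, Finset.card_univ]
    _ = ∑ σ : Equiv.Perm (Fin n), ∑ p : Fin n → Fin d × Fin d,
          t p • tens (fun k => E (p (σ k))) :=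
        Finset.sum_congr rfl fun σ _ => (hdecomp σ).symm
    _ = ∑ p : Fin n → Fin d × Fin d, ∑ σ : Equiv.Perm (Fin n),
          t p • tens (fun k => E (p (σ k))) := Finset.sum_comm
    _ = ∑ p : Fin n → Fin d × Fin d, t p •
          ∑ σ : Equiv.Perm (Fin n), tens ((fun k => E (p k)) ∘ ⇑σ) :=
        Finset.sum_congr rfl fun p _ => (Finset.smul_sum).symm
  have hmem : ∀ p : Fin n → Fin d × Fin d,
      (∑ σ : Equiv.Perm (Fin n), tens ((fun k => E (p k)) ∘ ⇑σ)) ∈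
        Algebra.adjoin ℂ
          {M : Matrix (Fin n → Fin d) (Fin n → Fin d) ℂ | ∃ A, M = ∑ i, sb i A} := by
    intro p
    rw [sum_perm_tens]
    exact Subalgebra.sum_mem _ fun s _ => Subalgebra.smul_mem _ (tens_const_mem _) _
  have hcard : (m : ℂ) ≠ 0 := Nat.cast_ne_zero.mpr Fintype.card_ne_zero
  have hTm : Tm = (m : ℂ)⁻¹ • ((m : ℂ) • Tm) := by
    rw [smul_smul, inv_mul_cancel₀ hcard, one_smul]
  rw [hTm, hsmul]
  exact Subalgebra.smul_mem _
    (Subalgebra.sum_mem _ fun p _ => Subalgebra.smul_mem _ (hmem p) _) _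

lemma adjoin_comm {M : Matrix (Fin n → Fin d) (Fin n → Fin d) ℂ}
    (hM : M ∈ Algebra.adjoin ℂ
      {M : Matrix (Fin n → Fin d) (Fin n → Fin d) ℂ | ∃ A, M = ∑ i, sb i A})
    (σ : Equiv.Perm (Fin n)) : M * Pmat σ = Pmat σ * M := by
  have hle : Algebra.adjoin ℂ
      {M : Matrix (Fin n → Fin d) (Fin n → Fin d) ℂ | ∃ A, M = ∑ i, sb i A}
      ≤ Subalgebra.centralizer ℂ
        {P | ∃ σ : Equiv.Perm (Fin n), P = Pmat (n := n) (d := d) σ} := by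
    rw [Algebra.adjoin_le_iff]
    rintro x ⟨A, rfl⟩
    rw [SetLike.mem_coe, Subalgebra.mem_centralizer_iff ℂ]
    rintro P ⟨σ', rfl⟩
    exact (Dmat_comm_Pmat A σ').symm
  exact ((Subalgebra.mem_centralizer_iff ℂ).mp (hle hM) (Pmat σ) ⟨σ, rfl⟩).symm

lemma toLin'_Pmat (σ : Equiv.Perm (Fin n)) :
    Matrix.toLin' (Pmat (n := n) (d := d) σ) = permAction n d σ := by
  apply LinearMap.ext
  intro f
  funext x
  rw [Matrix.toLin'_apply]
  show ((Pmat σ) *ᵥ f) x = f (x ∘ ⇑σ)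
  simp [Matrix.mulVec, dotProduct, Pmat, ite_mul, Finset.sum_ite_eq']

end SchurWeylAux

/-- The algebra generated by the collective operators Δ(A) is exactly the
commutant of the permutation action on tensor factors. -/
theorem collective_operators_generate_commutant (n d : ℕ) :
    (Algebra.adjoin ℂ
        {S : Module.End ℂ (TensorPowSpace n d) |
          ∃ A : Matrix (Fin d) (Fin d) ℂ, S = collective n d A}
      : Set (Module.End ℂ (TensorPowSpace n d)))
    = {T : Module.End ℂ (TensorPowSpace n d) |
        ∀ σ : Equiv.Perm (Fin n),
          T * permAction n d σ = permAction n d σ * T} := by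
  classical
  set e : Matrix (Fin n → Fin d) (Fin n → Fin d) ℂ ≃ₐ[ℂ]
      Module.End ℂ (TensorPowSpace n d) := Matrix.toLinAlgEquiv' with he_def
  have he : ∀ M : Matrix (Fin n → Fin d) (Fin n → Fin d) ℂ, e M = Matrix.toLin' M :=
    fun M => LinearMap.ext fun v => by
      rw [he_def]
      rw [Matrix.toLinAlgEquiv'_apply, Matrix.toLin'_apply]
  have hcap : ∀ A : Matrix (Fin d) (Fin d) ℂ,
      collective n d A = e (∑ i, SchurWeylAux.sb i A) := by
    intro A
    rw [collective, SchurWeylAux.collective_matrix, he]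
  have hperm : ∀ σ : Equiv.Perm (Fin n),
      permAction n d σ = e (SchurWeylAux.Pmat σ) := by
    intro σ
    rw [he]
    exact (SchurWeylAux.toLin'_Pmat σ).symm
  have hgens : {S : Module.End ℂ (TensorPowSpace n d) |
        ∃ A : Matrix (Fin d) (Fin d) ℂ, S = collective n d A}
      = ⇑e '' {M : Matrix (Fin n → Fin d) (Fin n → Fin d) ℂ |
          ∃ A, M = ∑ i, SchurWeylAux.sb i A} := by
    ext S
    constructor
    · rintro ⟨A, rfl⟩
      exact ⟨∑ i, SchurWeylAux.sb i A, ⟨A, rfl⟩, (hcap A).symm⟩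
    · rintro ⟨M, ⟨A, rfl⟩, rfl⟩
      exact ⟨A, (hcap A).symm⟩
  apply Set.eq_of_subset_of_subset
  · intro T hT
    rw [SetLike.mem_coe, hgens,
      show (⇑e '' {M : Matrix (Fin n → Fin d) (Fin n → Fin d) ℂ |
          ∃ A, M = ∑ i, SchurWeylAux.sb i A})
        = ⇑e.toAlgHom '' {M : Matrix (Fin n → Fin d) (Fin n → Fin d) ℂ |
          ∃ A, M = ∑ i, SchurWeylAux.sb i A} from rfl,
      ← AlgHom.map_adjoin] at hT
    obtain ⟨M, hM, rfl⟩ := Subalgebra.mem_map.mp hT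
    intro σ
    have hcm := SchurWeylAux.adjoin_comm hM σ
    show e.toAlgHom M * permAction n d σ = permAction n d σ * e.toAlgHom M
    rw [hperm σ]
    show e M * e (SchurWeylAux.Pmat σ) = e (SchurWeylAux.Pmat σ) * e M
    rw [← _root_.map_mul, ← _root_.map_mul, hcm]
  · intro T hT
    have hM : ∀ σ : Equiv.Perm (Fin n),
        (e.symm T) * SchurWeylAux.Pmat σ = SchurWeylAux.Pmat σ * (e.symm T) := by
      intro σ
      apply e.injective
      rw [_root_.map_mul, _root_.map_mul, AlgEquiv.apply_symm_apply, ← hperm σ]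
      exact hT σ
    have hmain := SchurWeylAux.matrix_main (e.symm T) hM
    rw [SetLike.mem_coe, hgens,
      show (⇑e '' {M : Matrix (Fin n → Fin d) (Fin n → Fin d) ℂ |
          ∃ A, M = ∑ i, SchurWeylAux.sb i A})
        = ⇑e.toAlgHom '' {M : Matrix (Fin n → Fin d) (Fin n → Fin d) ℂ |
          ∃ A, M = ∑ i, SchurWeylAux.sb i A} from rfl,
      ← AlgHom.map_adjoin]
    exact Subalgebra.mem_map.mpr ⟨e.symm T, hmain, by simp⟩
end
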